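/- arXiv:1804.01071 — 4 statements merged into one kernel-verified Lean document; each statement's English description precedes it below -/
import Mathlib

section
/- Let d ≥ 1, let A be a symmetric d×d real matrix, and let η > 0 and ε ∈ ℝ. Then for every integer T ≥ 1, the expected matrix E[B_T] satisfies the recurrence E[B_T] = E[B_{T−1}] + η ( Aᵀ E[B_{T−1}] + E[B_{T−1}] A ) + η² d² diag( Aᵀ diag(E[B_{T−1}]) A ). -/
open Matrix BigOperators

/-- The rank-one sample matrix `A_{(i,j)} = d² A_{ij} e_i e_jᵀ`. -/
noncomputable def sampleMat {d : ℕ} (A : Matrix (Fin d) (Fin d) ℝ) (p : Fin d × Fin d) :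
    Matrix (Fin d) (Fin d) ℝ :=
  ((d : ℝ) ^ 2 * A p.1 p.2) • Matrix.single p.1 p.2 1

/-- `P_T(ω) = (I + η A_{(i_T,j_T)}) ⋯ (I + η A_{(i_1,j_1)})`. -/
noncomputable def prodMat {d : ℕ} (A : Matrix (Fin d) (Fin d) ℝ) (η : ℝ) :
    (T : ℕ) → (Fin T → Fin d × Fin d) → Matrix (Fin d) (Fin d) ℝ
  | 0, _ => 1
  | (T + 1), ω => (1 + η • sampleMat A (ω (Fin.last T))) * prodMat A η T (fun t => ω t.castSucc)

/-- `E[B_T]`: the average of `P_T(ω)ᵀ ((1-ε)I - A) P_T(ω)` over all sequences `ω`. -/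
noncomputable def EB {d : ℕ} (A : Matrix (Fin d) (Fin d) ℝ) (η ε : ℝ) (T : ℕ) :
    Matrix (Fin d) (Fin d) ℝ :=
  (Fintype.card (Fin T → Fin d × Fin d) : ℝ)⁻¹ •
    ∑ ω : Fin T → Fin d × Fin d,
      (prodMat A η T ω)ᵀ * ((1 - ε) • (1 : Matrix (Fin d) (Fin d) ℝ) - A) * prodMat A η T ω

/-- The operator (spectral) norm of a matrix, as a map on Euclidean space. -/
noncomputable def opNorm {d : ℕ} (M : Matrix (Fin d) (Fin d) ℝ) : ℝ :=
  ‖Matrix.toEuclideanCLM (𝕜 := ℝ) M‖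

/-- The maximum Euclidean column norm `‖M‖_{1→2} = max_j ‖M e_j‖₂`. -/
noncomputable def colNorm {d : ℕ} (M : Matrix (Fin d) (Fin d) ℝ) : ℝ :=
  ⨆ j : Fin d, Real.sqrt (∑ i : Fin d, (M i j) ^ 2)

/-- `diag(M)`: the diagonal matrix with the same diagonal as `M`. -/
def diagPart {d : ℕ} (M : Matrix (Fin d) (Fin d) ℝ) : Matrix (Fin d) (Fin d) ℝ :=
  Matrix.diagonal M.diag

lemma sum_sampleMat {d : ℕ} (A : Matrix (Fin d) (Fin d) ℝ) :
    ∑ p : Fin d × Fin d, sampleMat A p = ((d : ℝ) ^ 2) • A := by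
  ext a b
  simp only [sampleMat, Matrix.sum_apply, Matrix.smul_apply, Matrix.single,
    Matrix.of_apply, smul_eq_mul, mul_ite, mul_one, mul_zero]
  rw [Fintype.sum_prod_type]
  rw [Finset.sum_eq_single a (by intro x _ hx; simp [hx, Ne.symm hx]) (by simp)]
  simp

lemma sum_quad {d : ℕ} (A C : Matrix (Fin d) (Fin d) ℝ) :
    ∑ p : Fin d × Fin d, (sampleMat A p)ᵀ * C * sampleMat A p
      = ((d : ℝ) ^ 4) • diagPart (Aᵀ * diagPart C * A) := by
  ext a b
  simp only [sampleMat, Matrix.sum_apply, Matrix.smul_apply, Matrix.mul_apply,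
    Matrix.transpose_apply, Matrix.single, Matrix.of_apply, smul_eq_mul,
    diagPart, Matrix.diagonal, Matrix.diag, mul_ite, mul_one, mul_zero, ite_mul, zero_mul,
    Finset.sum_ite_eq, Finset.sum_ite_eq', Finset.mem_univ, if_true]
  rw [Fintype.sum_prod_type]
  simp only [ite_and, Finset.sum_ite_eq, Finset.mem_univ, if_true]
  simp only [Finset.sum_ite_eq', Finset.mem_univ, if_true]
  rcases eq_or_ne a b with rfl | hab
  · simp [Finset.mul_sum]; apply Finset.sum_congr rfl; intro x _; ring
  · simp [hab, Ne.symm hab]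

lemma step_sum {d : ℕ} (A C : Matrix (Fin d) (Fin d) ℝ) (η : ℝ) :
    ∑ p : Fin d × Fin d, (1 + η • sampleMat A p)ᵀ * C * (1 + η • sampleMat A p)
      = ((d : ℝ) ^ 2) •
        (C + η • (Aᵀ * C + C * A)
          + (η ^ 2 * (d : ℝ) ^ 2) • diagPart (Aᵀ * diagPart C * A)) := by
  have expand : ∀ p : Fin d × Fin d,
      (1 + η • sampleMat A p)ᵀ * C * (1 + η • sampleMat A p)
        = C + η • ((sampleMat A p)ᵀ * C) + η • (C * sampleMat A p)
          + (η ^ 2) • ((sampleMat A p)ᵀ * C * sampleMat A p) := by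
    intro p
    simp only [Matrix.transpose_add, Matrix.transpose_one, Matrix.transpose_smul]
    rw [add_mul, add_mul, one_mul, mul_add, mul_add, mul_one]
    simp only [Matrix.smul_mul, Matrix.mul_smul, smul_smul]
    rw [mul_one, sq]
    abel
  simp only [expand]
  rw [Finset.sum_add_distrib, Finset.sum_add_distrib, Finset.sum_add_distrib,
    ← Finset.smul_sum, ← Finset.smul_sum, ← Finset.smul_sum,
    ← Finset.sum_mul, ← Finset.mul_sum]
  have h1 : ∑ p : Fin d × Fin d, (sampleMat A p)ᵀ = ((d : ℝ) ^ 2) • Aᵀ := by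
    rw [← Matrix.transpose_sum, sum_sampleMat, Matrix.transpose_smul]
  have hcard : ∑ _p : Fin d × Fin d, C = ((d : ℝ) ^ 2) • C := by
    rw [Finset.sum_const, Finset.card_univ]
    simp [Fintype.card_prod, ← Nat.cast_smul_eq_nsmul ℝ, pow_two]
  rw [h1, sum_sampleMat, sum_quad, hcard]
  simp only [Matrix.smul_mul, Matrix.mul_smul, smul_smul, smul_add]
  module

lemma prodMat_cons {d : ℕ} (A : Matrix (Fin d) (Fin d) ℝ) (η : ℝ) :
    ∀ (T : ℕ) (p : Fin d × Fin d) (ω : Fin T → Fin d × Fin d),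
      prodMat A η (T + 1) (Fin.cons p ω) = prodMat A η T ω * (1 + η • sampleMat A p)
  | 0, p, ω => by
    simp [prodMat, Fin.last]
  | (T + 1), p, ω => by
    have hlast : (Fin.cons p ω : Fin (T + 2) → Fin d × Fin d) (Fin.last (T + 1))
        = ω (Fin.last T) := by
      rw [show (Fin.last (T + 1)) = (Fin.last T).succ from rfl, Fin.cons_succ]
    have htail : (fun t : Fin (T + 1) => (Fin.cons p ω : Fin (T + 2) → Fin d × Fin d) t.castSucc)
        = Fin.cons p (fun t : Fin T => ω t.castSucc) := by
      funext t
      refine Fin.cases ?_ (fun s => ?_) t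
      · simp
      · rw [show (Fin.succ s).castSucc = (s.castSucc).succ from rfl, Fin.cons_succ,
          Fin.cons_succ]
    show (1 + η • sampleMat A ((Fin.cons p ω : Fin (T+2) → _) (Fin.last (T+1)))) *
        prodMat A η (T+1) (fun t => (Fin.cons p ω : Fin (T+2) → _) t.castSucc) = _
    rw [hlast, htail, prodMat_cons A η T p (fun t : Fin T => ω t.castSucc)]
    show _ = (1 + η • sampleMat A (ω (Fin.last T))) * prodMat A η T (fun t => ω t.castSucc) * _
    rw [mul_assoc]

theorem stmt1 {d : ℕ} (hd : 1 ≤ d) (A : Matrix (Fin d) (Fin d) ℝ) (hsymm : A.IsSymm)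
    (η ε : ℝ) (hη : 0 < η) (T : ℕ) (hT : 1 ≤ T) :
    EB A η ε T = EB A η ε (T - 1)
      + η • (Aᵀ * EB A η ε (T - 1) + EB A η ε (T - 1) * A)
      + (η ^ 2 * (d : ℝ) ^ 2) • diagPart (Aᵀ * diagPart (EB A η ε (T - 1)) * A) := by
  obtain ⟨T, rfl⟩ : ∃ T', T = T' + 1 := ⟨T - 1, (Nat.succ_pred_eq_of_pos hT).symm⟩
  simp only [Nat.add_sub_cancel]
  set M : Matrix (Fin d) (Fin d) ℝ := (1 - ε) • (1 : Matrix (Fin d) (Fin d) ℝ) - A with hM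
  have hsum : ∑ ω : Fin (T + 1) → Fin d × Fin d,
      (prodMat A η (T + 1) ω)ᵀ * M * prodMat A η (T + 1) ω
      = ∑ p : Fin d × Fin d,
          (1 + η • sampleMat A p)ᵀ *
            (∑ ω : Fin T → Fin d × Fin d, (prodMat A η T ω)ᵀ * M * prodMat A η T ω) *
            (1 + η • sampleMat A p) := by
    rw [← (Fin.consEquiv (fun _ : Fin (T + 1) => Fin d × Fin d)).sum_comp]
    rw [Fintype.sum_prod_type]
    refine Finset.sum_congr rfl fun p _ => ?_
    rw [Finset.mul_sum, Finset.sum_mul]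
    refine Finset.sum_congr rfl fun ω _ => ?_
    have hpe : (Fin.consEquiv (fun _ : Fin (T + 1) => Fin d × Fin d)) (p, ω) = Fin.cons p ω := by
      funext t
      refine Fin.cases ?_ (fun s => ?_) t <;> simp [Fin.consEquiv, Fin.tail]
    rw [hpe, prodMat_cons, Matrix.transpose_mul]
    noncomm_ring
  have hd0 : ((d : ℝ) ^ 2) ≠ 0 := by positivity
  have hcard : (Fintype.card (Fin (T + 1) → Fin d × Fin d) : ℝ)
      = (d : ℝ) ^ 2 * (Fintype.card (Fin T → Fin d × Fin d) : ℝ) := by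
    simp [Fintype.card_fun, Fintype.card_prod, pow_succ]
    ring
  set c : ℝ := (Fintype.card (Fin T → Fin d × Fin d) : ℝ) with hc
  haveI : Nonempty (Fin d) := ⟨⟨0, hd⟩⟩
  have hcpos : (0 : ℝ) < c := by rw [hc]; exact_mod_cast Fintype.card_pos
  have hcne : c ≠ 0 := hcpos.ne'
  have hC : ∑ ω : Fin T → Fin d × Fin d, (prodMat A η T ω)ᵀ * M * prodMat A η T ω
      = c • EB A η ε T := by
    rw [EB, smul_smul, mul_inv_cancel₀ hcne, one_smul]
  rw [EB, hsum, hC]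
  simp only [Matrix.mul_smul, Matrix.smul_mul, ← Finset.smul_sum]
  rw [step_sum, hcard, mul_inv, smul_smul, smul_smul]
  have h1 : ((d:ℝ)^2)⁻¹ * c⁻¹ * c * (d:ℝ)^2 = 1 := by field_simp
  rw [h1, one_smul]
end

section
/- Let d ≥ 1, let A be a symmetric d×d real matrix, and let X be any d×d real matrix. If (i,j) is drawn uniformly at random from {1,…,d}² and A_{(i,j)} := d² A_{ij} e_i e_jᵀ, then E[ A_{(i,j)}ᵀ X A_{(i,j)} ] = d² diag( A diag(X) A ), where the expectation is the average over all d² pairs (i,j). -/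
open Matrix BigOperators

lemma sample_conj {d : ℕ} (A X : Matrix (Fin d) (Fin d) ℝ) (p : Fin d × Fin d) :
    (sampleMat A p)ᵀ * X * sampleMat A p
      = ((((d : ℝ) ^ 2 * A p.1 p.2) ^ 2) * X p.1 p.1) •
          Matrix.single p.2 p.2 1 := by
  ext a b
  simp only [sampleMat, Matrix.transpose_smul, Matrix.smul_mul, Matrix.mul_smul,
    Matrix.smul_apply, Matrix.mul_apply, Matrix.transpose_apply,
    Matrix.single, Matrix.of_apply, smul_eq_mul]
  simp only [mul_ite, ite_mul, mul_one, mul_zero, zero_mul, one_mul, ite_and,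
    Finset.sum_ite_eq, Finset.sum_ite_eq', Finset.mem_univ, if_true]
  by_cases h1 : p.2 = a <;> by_cases h2 : p.2 = b <;> simp [h1, h2] <;> ring

theorem stmt2 {d : ℕ} (hd : 1 ≤ d) (A : Matrix (Fin d) (Fin d) ℝ) (hsymm : A.IsSymm)
    (X : Matrix (Fin d) (Fin d) ℝ) :
    (Fintype.card (Fin d × Fin d) : ℝ)⁻¹ •
        ∑ p : Fin d × Fin d, (sampleMat A p)ᵀ * X * sampleMat A p
      = ((d : ℝ) ^ 2) • diagPart (A * diagPart X * A) := by
  have h1 : ∀ p : Fin d × Fin d, (sampleMat A p)ᵀ * X * sampleMat A p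
      = ((((d : ℝ) ^ 2 * A p.1 p.2) ^ 2) * X p.1 p.1) • Matrix.single p.2 p.2 1 :=
    sample_conj A X
  simp only [h1]
  ext k l
  simp only [Matrix.smul_apply, Matrix.sum_apply, Matrix.single,
    Matrix.of_apply, smul_eq_mul, Fintype.card_prod, Fintype.card_fin,
    Fintype.sum_prod_type, diagPart, Matrix.diagonal_apply, Matrix.diag,
    Matrix.mul_apply]
  simp only [mul_ite, ite_mul, mul_one, mul_zero, zero_mul, one_mul, ite_and,
    Finset.sum_ite_eq, Finset.sum_ite_eq', Finset.mem_univ, if_true,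
    Finset.sum_ite_irrel, Finset.sum_const_zero]
  have hA : ∀ i j, A i j = A j i := fun i j => congrFun (congrFun hsymm j) i
  by_cases hkl : k = l
  · subst hkl
    simp only [if_pos rfl]
    have hd0 : (d : ℝ) ≠ 0 := by positivity
    rw [Finset.mul_sum, Finset.mul_sum]
    refine Finset.sum_congr rfl fun i _ => ?_
    rw [hA i k]
    field_simp
    push_cast
    ring
  · simp [hkl, Ne.symm hkl]
end

section
/- Let d ≥ 1, let A be a symmetric d×d real matrix with ‖A‖ ≤ 1, let η > 0, ε ∈ ℝ, and let w₀ ∈ ℝ^d be a unit vector. Let (v_1,…,v_d) be an orthonormal basis of eigenvectors of A with corresponding eigenvalues s_1,…,s_d. Then for every integer T ≥ 1, E[⟨w₀, B_T w₀⟩] ≤ Σ_{j=1}^d (1 + 2η s_j)^T (1 − ε − s_j) ⟨w₀, v_j⟩² + η² d² Σ_{i=1}^T (1 + 2η)^{T−i} ‖diag(E[B_{i−1}])‖. -/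
open Matrix BigOperators

/-! ### Auxiliary definitions and lemmas -/

noncomputable def en {d : ℕ} (u : Fin d → ℝ) : ℝ := Real.sqrt (∑ i, (u i) ^ 2)

lemma en_nonneg {d : ℕ} (u : Fin d → ℝ) : 0 ≤ en u := Real.sqrt_nonneg _

lemma en_eq_norm {d : ℕ} (u : Fin d → ℝ) :
    en u = ‖(WithLp.equiv 2 (Fin d → ℝ)).symm u‖ := by
  rw [EuclideanSpace.norm_eq]
  simp [en, sq_abs]

lemma dot_mulVec_abs_le {d : ℕ} (M : Matrix (Fin d) (Fin d) ℝ) (u w : Fin d → ℝ) :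
    |u ⬝ᵥ (M *ᵥ w)| ≤ opNorm M * en u * en w := by
  set u' := (WithLp.equiv 2 (Fin d → ℝ)).symm u
  set w' := (WithLp.equiv 2 (Fin d → ℝ)).symm w
  have h1 : u ⬝ᵥ (M *ᵥ w) = inner ℝ u' (Matrix.toEuclideanCLM (𝕜 := ℝ) M w') := by
    exact (Matrix.inner_toEuclideanCLM M u' w').symm
  rw [h1, en_eq_norm, en_eq_norm]
  calc |inner ℝ u' (Matrix.toEuclideanCLM (𝕜 := ℝ) M w')|
      ≤ ‖u'‖ * ‖Matrix.toEuclideanCLM (𝕜 := ℝ) M w'‖ := abs_real_inner_le_norm _ _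
    _ ≤ ‖u'‖ * (opNorm M * ‖w'‖) := by
        gcongr; exact ContinuousLinearMap.le_opNorm _ _
    _ = opNorm M * ‖u'‖ * ‖w'‖ := by ring

lemma en_mulVec_le {d : ℕ} (M : Matrix (Fin d) (Fin d) ℝ) (w : Fin d → ℝ) :
    en (M *ᵥ w) ≤ opNorm M * en w := by
  rw [en_eq_norm, en_eq_norm]
  have h : (WithLp.equiv 2 (Fin d → ℝ)).symm (M *ᵥ w)
      = Matrix.toEuclideanCLM (𝕜 := ℝ) M ((WithLp.equiv 2 (Fin d → ℝ)).symm w) := by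
    rfl
  rw [h]
  exact ContinuousLinearMap.le_opNorm _ _

noncomputable def Dmat {d : ℕ} (A M : Matrix (Fin d) (Fin d) ℝ) : Matrix (Fin d) (Fin d) ℝ :=
  Matrix.diagonal (fun j => (d : ℝ) ^ 2 * ∑ i, (A i j) ^ 2 * M i i)

lemma sampleMat_apply {d : ℕ} (A : Matrix (Fin d) (Fin d) ℝ) (p : Fin d × Fin d) (x y : Fin d) :
    sampleMat A p x y = (d : ℝ) ^ 2 * A p.1 p.2 * (if p.1 = x ∧ p.2 = y then 1 else 0) := by
  simp [sampleMat, Matrix.single, Matrix.smul_apply]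

lemma sum_mul_sampleMat {d : ℕ} (A M : Matrix (Fin d) (Fin d) ℝ) :
    ∑ p : Fin d × Fin d, M * sampleMat A p = ((d : ℝ) ^ 2) • (M * A) := by
  ext a b
  simp only [Matrix.sum_apply, Matrix.mul_apply, Matrix.smul_apply,
    sampleMat_apply, Fintype.sum_prod_type, smul_eq_mul]
  rw [Finset.mul_sum]
  refine Finset.sum_congr rfl fun i _ => ?_
  simp [ite_and, mul_ite, ite_mul, Finset.sum_ite_eq, Finset.sum_ite_eq']
  ring

lemma sum_sampleMat_transpose_mul {d : ℕ} (A M : Matrix (Fin d) (Fin d) ℝ) :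
    ∑ p : Fin d × Fin d, (sampleMat A p)ᵀ * M = ((d : ℝ) ^ 2) • (Aᵀ * M) := by
  ext a b
  simp only [Matrix.sum_apply, Matrix.mul_apply, Matrix.transpose_apply, Matrix.smul_apply,
    sampleMat_apply, Fintype.sum_prod_type, smul_eq_mul]
  rw [Finset.mul_sum]
  refine Finset.sum_congr rfl fun i _ => ?_
  simp [ite_and, mul_ite, ite_mul, Finset.sum_ite_eq, Finset.sum_ite_eq']
  ring

lemma sum_sampleMat_conj {d : ℕ} (A M : Matrix (Fin d) (Fin d) ℝ) :
    ∑ p : Fin d × Fin d, (sampleMat A p)ᵀ * M * sampleMat A p = ((d : ℝ) ^ 2) • Dmat A M := by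
  ext a b
  simp only [Matrix.sum_apply, Matrix.mul_apply, Matrix.transpose_apply, Matrix.smul_apply,
    sampleMat_apply, Fintype.sum_prod_type, smul_eq_mul, Finset.sum_mul, Finset.mul_sum]
  by_cases hab : a = b
  · subst hab
    simp only [Dmat, Matrix.diagonal_apply_eq]
    rw [Finset.mul_sum, Finset.mul_sum]
    refine Finset.sum_congr rfl fun i _ => ?_
    simp [ite_and, mul_ite, ite_mul, Finset.sum_ite_eq, Finset.sum_ite_eq']
    ring
  · simp only [Dmat, Matrix.diagonal_apply_ne _ hab, mul_zero]
    refine Finset.sum_eq_zero fun i _ => Finset.sum_eq_zero fun j _ => ?_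
    refine Finset.sum_eq_zero fun c _ => Finset.sum_eq_zero fun c' _ => ?_
    by_cases h2 : j = a
    · by_cases h3 : j = b
      · exact absurd (h2 ▸ h3) hab
      · simp [h3]
    · simp [h2]

lemma prodMat_succ_left {d : ℕ} (A : Matrix (Fin d) (Fin d) ℝ) (η : ℝ) :
    ∀ (T : ℕ) (ω : Fin (T + 1) → Fin d × Fin d),
      prodMat A η (T + 1) ω
        = prodMat A η T (fun t => ω t.succ) * (1 + η • sampleMat A (ω 0))
  | 0, ω => by simp [prodMat]
  | (T + 1), ω => by
      have IH := prodMat_succ_left A η T (fun t => ω t.castSucc)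
      simp only [prodMat] at IH ⊢
      rw [IH, ← Matrix.mul_assoc]
      have h1 : (Fin.last (T+1)) = (Fin.last T).succ := (Fin.succ_last T).symm
      have h2 : ((0 : Fin (T+1)).castSucc) = (0 : Fin (T+2)) := rfl
      have h3 : (fun t : Fin T => ω t.succ.castSucc) = fun t => ω t.castSucc.succ := by
        funext t; rw [Fin.succ_castSucc]
      rw [h1, h2, h3]

lemma sum_conj_step {d : ℕ} (A M : Matrix (Fin d) (Fin d) ℝ) (η : ℝ) :
    ∑ p : Fin d × Fin d,
        (1 + η • sampleMat A p)ᵀ * M * (1 + η • sampleMat A p)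
      = ((d : ℝ) ^ 2) • (M + η • (Aᵀ * M + M * A) + (η ^ 2) • Dmat A M) := by
  have expand : ∀ p : Fin d × Fin d,
      (1 + η • sampleMat A p)ᵀ * M * (1 + η • sampleMat A p)
        = M + η • ((sampleMat A p)ᵀ * M) + η • (M * sampleMat A p)
            + (η ^ 2) • ((sampleMat A p)ᵀ * M * sampleMat A p) := by
    intro p
    simp only [Matrix.transpose_add, Matrix.transpose_one, Matrix.transpose_smul,
      Matrix.add_mul, Matrix.mul_add, Matrix.one_mul, Matrix.mul_one,
      Matrix.smul_mul, Matrix.mul_smul, smul_add, smul_smul, ← sq]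
    abel
  rw [Finset.sum_congr rfl fun p _ => expand p]
  simp only [Finset.sum_add_distrib, ← Finset.smul_sum, sum_sampleMat_transpose_mul,
    sum_mul_sampleMat, sum_sampleMat_conj, Finset.sum_const, Finset.card_univ]
  have hcard : (Fintype.card (Fin d × Fin d)) • M = ((d : ℝ) ^ 2) • M := by
    rw [← Nat.cast_smul_eq_nsmul ℝ]
    congr 1
    push_cast [Fintype.card_prod, Fintype.card_fin]
    ring
  rw [hcard]
  simp only [smul_add, smul_smul]
  module

lemma EB_succ {d : ℕ} (hd : 1 ≤ d) (A : Matrix (Fin d) (Fin d) ℝ) (η ε : ℝ) (T : ℕ) :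
    EB A η ε (T + 1)
      = EB A η ε T + η • (Aᵀ * EB A η ε T + EB A η ε T * A)
          + (η ^ 2) • Dmat A (EB A η ε T) := by
  have hdne : ((d : ℝ) ^ 2) ≠ 0 := by
    have : (d : ℝ) ≠ 0 := Nat.cast_ne_zero.mpr (by omega)
    positivity
  set C : Matrix (Fin d) (Fin d) ℝ := (1 - ε) • (1 : Matrix (Fin d) (Fin d) ℝ) - A with hC
  have hcard : ∀ T : ℕ, (Fintype.card (Fin T → Fin d × Fin d) : ℝ) = ((d : ℝ) ^ 2) ^ T := by
    intro T
    rw [Fintype.card_fun]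
    push_cast [Fintype.card_prod, Fintype.card_fin]
    ring
  have hsum : ∑ ω : Fin (T + 1) → Fin d × Fin d,
      (prodMat A η (T+1) ω)ᵀ * C * prodMat A η (T+1) ω
      = ∑ p : Fin d × Fin d, (1 + η • sampleMat A p)ᵀ *
          (∑ τ : Fin T → Fin d × Fin d, (prodMat A η T τ)ᵀ * C * prodMat A η T τ) *
          (1 + η • sampleMat A p) := by
    rw [← Equiv.sum_comp (Fin.consEquiv (fun _ => Fin d × Fin d))
      (fun ω => (prodMat A η (T+1) ω)ᵀ * C * prodMat A η (T+1) ω)]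
    rw [Fintype.sum_prod_type]
    refine Finset.sum_congr rfl fun p _ => ?_
    rw [Finset.mul_sum, Finset.sum_mul]
    refine Finset.sum_congr rfl fun τ _ => ?_
    have hcons : prodMat A η (T+1) ((Fin.consEquiv (fun _ => Fin d × Fin d)) (p, τ))
        = prodMat A η T τ * (1 + η • sampleMat A p) := by
      rw [show ((Fin.consEquiv (fun _ => Fin d × Fin d)) (p, τ)) = Fin.cons p τ from rfl]
      rw [prodMat_succ_left]
      simp [Fin.cons_succ, Fin.cons_zero]
    rw [hcons, Matrix.transpose_mul]
    noncomm_ring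
  have hEBsum : ∑ τ : Fin T → Fin d × Fin d, (prodMat A η T τ)ᵀ * C * prodMat A η T τ
      = (((d:ℝ)^2)^T) • EB A η ε T := by
    rw [EB, hcard, smul_smul, mul_inv_cancel₀ (pow_ne_zero _ hdne), one_smul]
  rw [EB, hcard, hsum, hEBsum]
  have : ∑ p : Fin d × Fin d,
      (1 + η • sampleMat A p)ᵀ * ((((d:ℝ)^2)^T) • EB A η ε T) * (1 + η • sampleMat A p)
      = (((d:ℝ)^2)^T) • ∑ p : Fin d × Fin d,
          (1 + η • sampleMat A p)ᵀ * EB A η ε T * (1 + η • sampleMat A p) := by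
    rw [Finset.smul_sum]
    refine Finset.sum_congr rfl fun p _ => ?_
    rw [Matrix.mul_smul, Matrix.smul_mul]
  rw [this, sum_conj_step]
  have hc : ((((d:ℝ)^2)^(T+1))⁻¹ * (((d:ℝ)^2)^T)) * ((d:ℝ)^2) = 1 := by
    rw [pow_succ]; field_simp
  rw [smul_smul, smul_smul, hc, one_smul]

noncomputable def Lop {d : ℕ} (A : Matrix (Fin d) (Fin d) ℝ) (η : ℝ) :
    Matrix (Fin d) (Fin d) ℝ →ₗ[ℝ] Matrix (Fin d) (Fin d) ℝ where
  toFun M := M + η • (A * M + M * A)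
  map_add' M N := by
    simp only [Matrix.mul_add, Matrix.add_mul, smul_add]
    abel
  map_smul' c M := by
    simp only [Matrix.mul_smul, Matrix.smul_mul, smul_add, smul_smul, RingHom.id_apply,
      mul_comm c η]

lemma Lop_apply {d : ℕ} (A : Matrix (Fin d) (Fin d) ℝ) (η : ℝ) (M : Matrix (Fin d) (Fin d) ℝ) :
    Lop A η M = M + η • (A * M + M * A) := rfl

lemma Lop_pow_succ {d : ℕ} (A : Matrix (Fin d) (Fin d) ℝ) (η : ℝ) (k : ℕ)
    (M : Matrix (Fin d) (Fin d) ℝ) :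
    ((Lop A η) ^ (k + 1)) M = Lop A η (((Lop A η) ^ k) M) := by
  rw [pow_succ']
  rfl

lemma EB_formula {d : ℕ} (hd : 1 ≤ d) (A : Matrix (Fin d) (Fin d) ℝ) (hsymm : A.IsSymm)
    (η ε : ℝ) (T : ℕ) :
    EB A η ε T = ((Lop A η) ^ T) ((1 - ε) • (1 : Matrix (Fin d) (Fin d) ℝ) - A)
      + ∑ i ∈ Finset.range T, (η ^ 2) • ((Lop A η) ^ (T - 1 - i)) (Dmat A (EB A η ε i)) := by
  induction T with
  | zero =>
      simp [EB, prodMat]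
  | succ T ih =>
      rw [EB_succ hd A η ε T, hsymm.eq, ← Lop_apply]
      nth_rewrite 1 [ih]
      rw [map_add, map_sum, ← Lop_pow_succ]
      have hsum : ∀ i ∈ Finset.range T,
          Lop A η ((η ^ 2) • ((Lop A η) ^ (T - 1 - i)) (Dmat A (EB A η ε i)))
            = (η ^ 2) • ((Lop A η) ^ (T + 1 - 1 - i)) (Dmat A (EB A η ε i)) := by
        intro i hi
        rw [Finset.mem_range] at hi
        rw [LinearMap.map_smul, ← Lop_pow_succ, show T - 1 - i + 1 = T + 1 - 1 - i from by omega]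
      rw [Finset.sum_congr rfl hsum, Finset.sum_range_succ,
        show T + 1 - 1 - T = 0 from by omega, pow_zero, Module.End.one_apply]
      abel

lemma L_iter_bilinear {d : ℕ} (A : Matrix (Fin d) (Fin d) ℝ) (hsymm : A.IsSymm)
    (hA : opNorm A ≤ 1) (η : ℝ) (hη : 0 ≤ η) (D : Matrix (Fin d) (Fin d) ℝ) (c : ℝ) (hc : 0 ≤ c)
    (hD : ∀ u z : Fin d → ℝ, |u ⬝ᵥ (D *ᵥ z)| ≤ c * en u * en z) :
    ∀ (k : ℕ) (u z : Fin d → ℝ),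
      |u ⬝ᵥ ((((Lop A η) ^ k) D) *ᵥ z)| ≤ (1 + 2 * η) ^ k * c * en u * en z := by
  intro k
  induction k with
  | zero =>
      intro u z
      simpa using hD u z
  | succ k ih =>
      intro u z
      rw [Lop_pow_succ, Lop_apply]
      set X := ((Lop A η) ^ k) D with hX
      have e1 : u ⬝ᵥ ((A * X) *ᵥ z) = (A *ᵥ u) ⬝ᵥ (X *ᵥ z) := by
        rw [← Matrix.mulVec_mulVec, Matrix.dotProduct_mulVec u A, ← Matrix.mulVec_transpose,
          hsymm.eq]
      have e2 : u ⬝ᵥ ((X * A) *ᵥ z) = u ⬝ᵥ (X *ᵥ (A *ᵥ z)) := by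
        rw [← Matrix.mulVec_mulVec]
      have hsplit : u ⬝ᵥ ((X + η • (A * X + X * A)) *ᵥ z)
          = u ⬝ᵥ (X *ᵥ z) + η * ((A *ᵥ u) ⬝ᵥ (X *ᵥ z)) + η * (u ⬝ᵥ (X *ᵥ (A *ᵥ z))) := by
        simp only [Matrix.add_mulVec, Matrix.smul_mulVec, dotProduct_add, dotProduct_smul,
          smul_eq_mul, e1, e2]
        ring
      rw [hsplit]
      have h1 : (0:ℝ) ≤ 1 + 2 * η := by linarith
      have hAu : en (A *ᵥ u) ≤ en u := by
        have h := en_mulVec_le A u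
        have h2 := en_nonneg u
        nlinarith
      have hAz : en (A *ᵥ z) ≤ en z := by
        have h := en_mulVec_le A z
        have h2 := en_nonneg z
        nlinarith
      have b1 := ih u z
      have b2 := ih (A *ᵥ u) z
      have b3 := ih u (A *ᵥ z)
      have hb2 : (1 + 2*η)^k * c * en (A *ᵥ u) * en z ≤ (1 + 2*η)^k * c * en u * en z := by
        have h' : ((1 + 2*η)^k * c) * en (A *ᵥ u) ≤ ((1 + 2*η)^k * c) * en u :=
          mul_le_mul_of_nonneg_left hAu (mul_nonneg (pow_nonneg h1 k) hc)
        exact mul_le_mul_of_nonneg_right h' (en_nonneg z)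
      have hb3 : (1 + 2*η)^k * c * en u * en (A *ᵥ z) ≤ (1 + 2*η)^k * c * en u * en z :=
        mul_le_mul_of_nonneg_left hAz
          (mul_nonneg (mul_nonneg (pow_nonneg h1 k) hc) (en_nonneg u))
      calc |u ⬝ᵥ (X *ᵥ z) + η * ((A *ᵥ u) ⬝ᵥ (X *ᵥ z)) + η * (u ⬝ᵥ (X *ᵥ (A *ᵥ z)))|
          ≤ |u ⬝ᵥ (X *ᵥ z)| + |η * ((A *ᵥ u) ⬝ᵥ (X *ᵥ z))| + |η * (u ⬝ᵥ (X *ᵥ (A *ᵥ z)))| :=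
            abs_add_three _ _ _
        _ = |u ⬝ᵥ (X *ᵥ z)| + η * |(A *ᵥ u) ⬝ᵥ (X *ᵥ z)| + η * |u ⬝ᵥ (X *ᵥ (A *ᵥ z))| := by
            rw [abs_mul, abs_mul, abs_of_nonneg hη]
        _ ≤ (1 + 2*η)^k * c * en u * en z + η * ((1 + 2*η)^k * c * en u * en z)
              + η * ((1 + 2*η)^k * c * en u * en z) := by
            refine add_le_add (add_le_add b1 ?_) ?_
            · exact mul_le_mul_of_nonneg_left (le_trans b2 hb2) hη
            · exact mul_le_mul_of_nonneg_left (le_trans b3 hb3) hη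
        _ = (1 + 2*η)^(k+1) * c * en u * en z := by rw [pow_succ]; ring

lemma diag_entry_abs_le {d : ℕ} (M : Matrix (Fin d) (Fin d) ℝ) (i : Fin d) :
    |M i i| ≤ opNorm (diagPart M) := by
  have h := dot_mulVec_abs_le (diagPart M) (Pi.single i 1) (Pi.single i 1)
  have h1 : (Pi.single i 1 : Fin d → ℝ) ⬝ᵥ (diagPart M *ᵥ Pi.single i 1) = M i i := by
    simp [diagPart, Matrix.diagonal_mulVec_single, single_dotProduct, Matrix.diag]
  have h2 : en (Pi.single i 1 : Fin d → ℝ) = 1 := by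
    rw [en]
    rw [show (∑ a, (Pi.single i 1 : Fin d → ℝ) a ^ 2) = 1 from by
      simp [Pi.single_apply, sq, ite_and, Finset.sum_ite_eq']]
    exact Real.sqrt_one
  rw [h1, h2] at h
  simpa using h

lemma col_sq_sum_le {d : ℕ} (A : Matrix (Fin d) (Fin d) ℝ) (hA : opNorm A ≤ 1) (j : Fin d) :
    ∑ i, (A i j) ^ 2 ≤ 1 := by
  have hcol : (A *ᵥ Pi.single j 1) = fun i => A i j := by
    ext i
    simp [Matrix.mulVec_single]
  have h2 : en (Pi.single j 1 : Fin d → ℝ) = 1 := by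
    rw [en]
    rw [show (∑ a, (Pi.single j 1 : Fin d → ℝ) a ^ 2) = 1 from by
      simp [Pi.single_apply, sq, ite_and, Finset.sum_ite_eq']]
    exact Real.sqrt_one
  have h := en_mulVec_le A (Pi.single j 1)
  rw [hcol, h2, mul_one] at h
  have h3 : en (fun i => A i j) ≤ 1 := le_trans h hA
  have h4 : 0 ≤ ∑ i, (A i j) ^ 2 := Finset.sum_nonneg fun i _ => sq_nonneg _
  have h5 : Real.sqrt (∑ i, (A i j) ^ 2) ≤ 1 := h3
  nlinarith [Real.sq_sqrt h4, Real.sqrt_nonneg (∑ i, (A i j) ^ 2)]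

lemma cauchy_abs {d : ℕ} (u z : Fin d → ℝ) : ∑ j, |u j| * |z j| ≤ en u * en z := by
  have h2 := Finset.sum_mul_sq_le_sq_mul_sq Finset.univ (fun j => |u j|) (fun j => |z j|)
  simp only [sq_abs] at h2
  have h0 : 0 ≤ ∑ j, |u j| * |z j| :=
    Finset.sum_nonneg fun j _ => mul_nonneg (abs_nonneg _) (abs_nonneg _)
  rw [en, en, ← Real.sqrt_mul (Finset.sum_nonneg fun i _ => sq_nonneg _)]
  rw [Real.le_sqrt h0 (by positivity)]
  exact h2

lemma Dmat_bilinear {d : ℕ} (A M : Matrix (Fin d) (Fin d) ℝ) (hA : opNorm A ≤ 1)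
    (u z : Fin d → ℝ) :
    |u ⬝ᵥ (Dmat A M *ᵥ z)|
      ≤ ((d : ℝ) ^ 2 * opNorm (diagPart M)) * en u * en z := by
  set δ := opNorm (diagPart M) with hδdef
  have hδ : 0 ≤ δ := norm_nonneg _
  set g : Fin d → ℝ := fun j => (d : ℝ) ^ 2 * ∑ i, (A i j) ^ 2 * M i i with hg
  have hgb : ∀ j, |g j| ≤ (d : ℝ) ^ 2 * δ := by
    intro j
    rw [hg, abs_mul, abs_of_nonneg (by positivity : (0:ℝ) ≤ (d:ℝ)^2)]
    have : |∑ i, (A i j) ^ 2 * M i i| ≤ δ := by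
      calc |∑ i, (A i j) ^ 2 * M i i| ≤ ∑ i, |(A i j) ^ 2 * M i i| :=
            Finset.abs_sum_le_sum_abs _ _
        _ = ∑ i, (A i j) ^ 2 * |M i i| := by
            refine Finset.sum_congr rfl fun i _ => ?_
            rw [abs_mul, abs_of_nonneg (sq_nonneg _)]
        _ ≤ ∑ i, (A i j) ^ 2 * δ :=
            Finset.sum_le_sum fun i _ =>
              mul_le_mul_of_nonneg_left (diag_entry_abs_le M i) (sq_nonneg _)
        _ = (∑ i, (A i j) ^ 2) * δ := by rw [Finset.sum_mul]
        _ ≤ 1 * δ := mul_le_mul_of_nonneg_right (col_sq_sum_le A hA j) hδ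
        _ = δ := one_mul δ
    exact mul_le_mul_of_nonneg_left this (by positivity)
  have hform : u ⬝ᵥ (Dmat A M *ᵥ z) = ∑ j, u j * (g j * z j) := by
    simp [Dmat, dotProduct, Matrix.mulVec_diagonal, hg]
  rw [hform]
  calc |∑ j, u j * (g j * z j)| ≤ ∑ j, |u j * (g j * z j)| := Finset.abs_sum_le_sum_abs _ _
    _ = ∑ j, |g j| * (|u j| * |z j|) := by
        refine Finset.sum_congr rfl fun j _ => ?_
        rw [abs_mul, abs_mul]
        ring
    _ ≤ ∑ j, ((d : ℝ) ^ 2 * δ) * (|u j| * |z j|) :=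
        Finset.sum_le_sum fun j _ =>
          mul_le_mul_of_nonneg_right (hgb j) (mul_nonneg (abs_nonneg _) (abs_nonneg _))
    _ = ((d : ℝ) ^ 2 * δ) * ∑ j, |u j| * |z j| := by rw [Finset.mul_sum]
    _ ≤ ((d : ℝ) ^ 2 * δ) * (en u * en z) :=
        mul_le_mul_of_nonneg_left (cauchy_abs u z) (by positivity)
    _ = ((d : ℝ) ^ 2 * δ) * en u * en z := by ring


theorem stmt3 {d : ℕ} (hd : 1 ≤ d) (A : Matrix (Fin d) (Fin d) ℝ) (hsymm : A.IsSymm)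
    (hA : opNorm A ≤ 1) (η ε : ℝ) (hη : 0 < η)
    (w₀ : Fin d → ℝ) (hw : ∑ i, (w₀ i) ^ 2 = 1)
    (v : Fin d → Fin d → ℝ) (s : Fin d → ℝ)
    (horth : ∀ i j, v i ⬝ᵥ v j = if i = j then (1 : ℝ) else 0)
    (heig : ∀ j, A *ᵥ v j = s j • v j)
    (T : ℕ) (hT : 1 ≤ T) :
    w₀ ⬝ᵥ (EB A η ε T *ᵥ w₀)
      ≤ ∑ j, (1 + 2 * η * s j) ^ T * (1 - ε - s j) * (w₀ ⬝ᵥ v j) ^ 2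
        + η ^ 2 * (d : ℝ) ^ 2 *
          ∑ i ∈ Finset.range T, (1 + 2 * η) ^ (T - 1 - i) * opNorm (diagPart (EB A η ε i)) := by
  have hη0 : 0 ≤ η := hη.le
  set P : Fin d → Matrix (Fin d) (Fin d) ℝ := fun j => vecMulVec (v j) (v j) with hPdef
  have hAP : ∀ j, A * P j = s j • P j := by
    intro j
    ext a b
    simp only [hPdef, Matrix.mul_apply, Matrix.vecMulVec_apply, Matrix.smul_apply, smul_eq_mul]
    calc ∑ c, A a c * (v j c * v j b) = (∑ c, A a c * v j c) * v j b := by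
          rw [Finset.sum_mul]; exact Finset.sum_congr rfl fun c _ => by ring
      _ = (A *ᵥ v j) a * v j b := rfl
      _ = s j * (v j a * v j b) := by
          rw [heig j]; simp only [Pi.smul_apply, smul_eq_mul]; ring
  have hPA : ∀ j, P j * A = s j • P j := by
    intro j
    ext a b
    simp only [hPdef, Matrix.mul_apply, Matrix.vecMulVec_apply, Matrix.smul_apply, smul_eq_mul]
    have hAv : ∑ c, v j c * A c b = s j * v j b := by
      calc ∑ c, v j c * A c b = ∑ c, Aᵀ b c * v j c := by
            exact Finset.sum_congr rfl fun c _ => by rw [Matrix.transpose_apply]; ring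
        _ = (Aᵀ *ᵥ v j) b := rfl
        _ = s j * v j b := by rw [hsymm.eq, heig j]; simp [Pi.smul_apply]
    calc ∑ c, v j a * v j c * A c b = v j a * ∑ c, v j c * A c b := by
          rw [Finset.mul_sum]; exact Finset.sum_congr rfl fun c _ => by ring
      _ = s j * (v j a * v j b) := by rw [hAv]; ring
  have hLP : ∀ j, Lop A η (P j) = (1 + 2 * η * s j) • P j := by
    intro j
    rw [Lop_apply, hAP j, hPA j]
    module
  have hLpow : ∀ (k : ℕ) (j : Fin d),
      ((Lop A η) ^ k) (P j) = ((1 + 2 * η * s j) ^ k) • P j := by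
    intro k
    induction k with
    | zero => intro j; simp
    | succ k ihk =>
        intro j
        rw [Lop_pow_succ, ihk j, LinearMap.map_smul, hLP j, smul_smul, pow_succ]
  have hVtV : ∀ a b : Fin d, (∑ j, v j a * v j b) = if a = b then (1 : ℝ) else 0 := by
    have hV1 : (Matrix.of v) * (Matrix.of v)ᵀ = 1 := by
      ext i j
      simp only [Matrix.mul_apply, Matrix.transpose_apply, Matrix.of_apply, Matrix.one_apply]
      simpa [dotProduct] using horth i j
    have hV2 : (Matrix.of v)ᵀ * (Matrix.of v) = 1 := mul_eq_one_comm.mp hV1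
    intro a b
    have h := congrFun (congrFun hV2 a) b
    simpa [Matrix.mul_apply, Matrix.transpose_apply, Matrix.one_apply] using h
  have honeP : ∑ j, P j = 1 := by
    ext a b
    simp only [Matrix.sum_apply, hPdef, Matrix.vecMulVec_apply, Matrix.one_apply]
    exact hVtV a b
  have hAeq : A = ∑ j, s j • P j := by
    calc A = A * ∑ j, P j := by rw [honeP, Matrix.mul_one]
      _ = ∑ j, A * P j := Finset.mul_sum _ _ _
      _ = ∑ j, s j • P j := Finset.sum_congr rfl fun j _ => hAP j
  have hCeq : (1 - ε) • (1 : Matrix (Fin d) (Fin d) ℝ) - A = ∑ j, (1 - ε - s j) • P j := by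
    conv_lhs => rw [← honeP, hAeq]
    rw [Finset.smul_sum, ← Finset.sum_sub_distrib]
    exact Finset.sum_congr rfl fun j _ => by rw [← sub_smul]
  let φ : Matrix (Fin d) (Fin d) ℝ →ₗ[ℝ] ℝ :=
    { toFun := fun M => w₀ ⬝ᵥ (M *ᵥ w₀)
      map_add' := fun M N => by simp [Matrix.add_mulVec, dotProduct_add]
      map_smul' := fun c M => by simp [Matrix.smul_mulVec, dotProduct_smul] }
  have hφ : ∀ M, φ M = w₀ ⬝ᵥ (M *ᵥ w₀) := fun M => rfl
  have hφP : ∀ j, φ (P j) = (w₀ ⬝ᵥ v j) ^ 2 := by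
    intro j
    have hPv : P j *ᵥ w₀ = (v j ⬝ᵥ w₀) • v j := by
      ext a
      simp only [hPdef, Matrix.mulVec, dotProduct, Matrix.vecMulVec_apply, Pi.smul_apply,
        smul_eq_mul]
      rw [Finset.sum_mul]
      exact Finset.sum_congr rfl fun b _ => by ring
    rw [hφ, hPv, dotProduct_smul, smul_eq_mul, dotProduct_comm (v j) w₀, sq]
  have henw : en w₀ = 1 := by rw [en, hw, Real.sqrt_one]
  rw [show w₀ ⬝ᵥ (EB A η ε T *ᵥ w₀) = φ (EB A η ε T) from rfl]
  rw [EB_formula hd A hsymm η ε T, map_add, map_sum]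
  have hmain1 : φ (((Lop A η) ^ T) ((1 - ε) • (1 : Matrix (Fin d) (Fin d) ℝ) - A))
      = ∑ j, (1 + 2 * η * s j) ^ T * (1 - ε - s j) * (w₀ ⬝ᵥ v j) ^ 2 := by
    rw [hCeq, map_sum, map_sum]
    refine Finset.sum_congr rfl fun j _ => ?_
    rw [LinearMap.map_smul, hLpow T j, LinearMap.map_smul, LinearMap.map_smul, hφP j,
      smul_eq_mul, smul_eq_mul]
    ring
  rw [hmain1]
  refine add_le_add_right ?_ _
  have hbound : ∀ i ∈ Finset.range T,
      φ ((η ^ 2) • ((Lop A η) ^ (T - 1 - i)) (Dmat A (EB A η ε i)))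
        ≤ η ^ 2 * ((1 + 2 * η) ^ (T - 1 - i)
            * ((d : ℝ) ^ 2 * opNorm (diagPart (EB A η ε i)))) := by
    intro i _
    rw [LinearMap.map_smul, smul_eq_mul]
    refine mul_le_mul_of_nonneg_left ?_ (sq_nonneg η)
    have hiter := L_iter_bilinear A hsymm hA η hη0 (Dmat A (EB A η ε i))
      ((d : ℝ) ^ 2 * opNorm (diagPart (EB A η ε i)))
      (mul_nonneg (by positivity) (norm_nonneg _)) (Dmat_bilinear A (EB A η ε i) hA)
      (T - 1 - i) w₀ w₀
    rw [henw] at hiter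
    calc φ (((Lop A η) ^ (T - 1 - i)) (Dmat A (EB A η ε i)))
        ≤ |φ (((Lop A η) ^ (T - 1 - i)) (Dmat A (EB A η ε i)))| := le_abs_self _
      _ ≤ (1 + 2 * η) ^ (T - 1 - i) * ((d : ℝ) ^ 2 * opNorm (diagPart (EB A η ε i))) * 1 * 1 := by
          rw [hφ]; exact hiter
      _ = (1 + 2 * η) ^ (T - 1 - i) * ((d : ℝ) ^ 2 * opNorm (diagPart (EB A η ε i))) := by ring
  calc ∑ i ∈ Finset.range T, φ ((η ^ 2) • ((Lop A η) ^ (T - 1 - i)) (Dmat A (EB A η ε i)))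
      ≤ ∑ i ∈ Finset.range T, η ^ 2 * ((1 + 2 * η) ^ (T - 1 - i)
          * ((d : ℝ) ^ 2 * opNorm (diagPart (EB A η ε i)))) := Finset.sum_le_sum hbound
    _ = η ^ 2 * (d : ℝ) ^ 2 *
          ∑ i ∈ Finset.range T, (1 + 2 * η) ^ (T - 1 - i) * opNorm (diagPart (EB A η ε i)) := by
        rw [Finset.mul_sum]
        exact Finset.sum_congr rfl fun i _ => by ring
end

section
/- Let η ∈ (0,1), ε > 0, let T be a positive integer, and set f(s) = (1 + 2ηs)^T (1 − ε − s) and s_c = (T(1−ε) − 1/(2η)) / (T+1). If s_c ∈ [0,1], then f(s_c) ≤ (1 + 2η(1−ε))^T / (η (T+1)). -/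
theorem stmt14 (η ε : ℝ) (hη : η ∈ Set.Ioo (0 : ℝ) 1) (hε : 0 < ε)
    (T : ℕ) (hT : 1 ≤ T)
    (sc : ℝ) (hsc : sc = ((T : ℝ) * (1 - ε) - 1 / (2 * η)) / ((T : ℝ) + 1))
    (hmem : sc ∈ Set.Icc (0 : ℝ) 1) :
    (1 + 2 * η * sc) ^ T * (1 - ε - sc) ≤ (1 + 2 * η * (1 - ε)) ^ T / (η * ((T : ℝ) + 1)) := by
  obtain ⟨hη0, hη1⟩ := hη
  obtain ⟨hsc0, hsc1⟩ := hmem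
  have hT1 : (0:ℝ) < (T:ℝ) + 1 := by positivity
  have hTpos : (0:ℝ) < (T:ℝ) := by exact_mod_cast hT
  have hinv : (0:ℝ) < 1 / (2 * η) := by positivity
  -- 1 - ε > 0
  have hεlt : 0 < 1 - ε := by
    by_contra h
    push_neg at h
    have h1 : (T:ℝ) * (1 - ε) ≤ 0 := mul_nonpos_of_nonneg_of_nonpos (le_of_lt hTpos) h
    have : sc < 0 := by
      rw [hsc]
      apply div_neg_of_neg_of_pos _ hT1
      linarith
    linarith
  set b : ℝ := 1 + 2 * η * (1 - ε) with hb
  have hbpos : 0 < b := by positivity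
  have hb3 : b ≤ 3 := by nlinarith
  have h1 : 1 - ε - sc = b / (2 * η * ((T:ℝ) + 1)) := by
    rw [hsc, hb]; field_simp; ring
  have h2 : 1 + 2 * η * sc = b * (T:ℝ) / ((T:ℝ) + 1) := by
    rw [hsc, hb]; field_simp; ring
  -- Bernoulli: (1 + 1/T)^T ≥ 2
  have hbern : (2:ℝ) ≤ (1 + 1/(T:ℝ))^T := by
    have h0 : (0:ℝ) ≤ 1/(T:ℝ) := by positivity
    have h := one_add_mul_le_pow (a := 1/(T:ℝ)) (by linarith : (-2:ℝ) ≤ 1/(T:ℝ)) T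
    have : (T:ℝ) * (1/(T:ℝ)) = 1 := by field_simp
    linarith [h, this.symm ▸ h]
  have hpow : 2 * (T:ℝ)^T ≤ ((T:ℝ) + 1)^T := by
    have h3 : (1 + 1/(T:ℝ))^T = ((T:ℝ)+1)^T / (T:ℝ)^T := by
      rw [← div_pow]
      congr 1
      field_simp
    rw [h3] at hbern
    have hTT : (0:ℝ) < (T:ℝ)^T := by positivity
    calc 2 * (T:ℝ)^T ≤ (((T:ℝ)+1)^T / (T:ℝ)^T) * (T:ℝ)^T := by
          exact mul_le_mul_of_nonneg_right hbern (le_of_lt hTT)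
      _ = ((T:ℝ)+1)^T := by field_simp
  rw [h1, h2]
  have hTT : (0:ℝ) < (T:ℝ)^T := by positivity
  have hT1T : (0:ℝ) < ((T:ℝ)+1)^T := by positivity
  have hbT : (0:ℝ) < b^T := by positivity
  rw [div_pow, mul_pow, div_mul_div_comm, div_le_div_iff₀ (by positivity) (by positivity)]
  have key : b * (T:ℝ)^T ≤ 2 * ((T:ℝ)+1)^T := by nlinarith
  have key2 : b^T * (b * (T:ℝ)^T) ≤ b^T * (2 * ((T:ℝ)+1)^T) :=
    mul_le_mul_of_nonneg_left key (le_of_lt hbT)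
  have key3 := mul_le_mul_of_nonneg_right key2 (le_of_lt (mul_pos hη0 hT1))
  nlinarith [key3]
end
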